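/- Assume λ_1 ≥ 48‖E‖ and that A has exactly r eigenvalues λ_i with λ_i ≥ λ_1/2. Then λ̃_1 − λ_1 ≤ max{ 6·r·x, 72·r·‖E‖²/λ_1 }, where x := max_{1≤i,j≤r} |u_iᵀ E u_j|. -/

import Mathlib

open Matrix

/-- Spectral (ℓ²-operator) norm of a real matrix. -/
noncomputable def matOpNorm {m n : ℕ} (M : Matrix (Fin m) (Fin n) ℝ) : ℝ :=
  ‖LinearMap.toContinuousLinearMap (Matrix.toEuclideanLin M)‖

lemma abs_le_of_sq_le' {a b : ℝ} (h : a^2 ≤ b^2) (hb : 0 ≤ b) : a ≤ b := by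
  nlinarith [sq_nonneg (a - b), sq_nonneg (a + b)]

lemma dot_self_nonneg' {n : ℕ} (v : Fin n → ℝ) : 0 ≤ v ⬝ᵥ v :=
  Finset.sum_nonneg fun i _ => mul_self_nonneg _

lemma mulVec_sq_le {n : ℕ} (E : Matrix (Fin n) (Fin n) ℝ) (v : Fin n → ℝ) :
    (E *ᵥ v) ⬝ᵥ (E *ᵥ v) ≤ matOpNorm E ^ 2 * (v ⬝ᵥ v) := by
  have hnorm : ∀ w : Fin n → ℝ, ‖(WithLp.equiv 2 (Fin n → ℝ)).symm w‖ ^ 2 = w ⬝ᵥ w := by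
    intro w
    rw [EuclideanSpace.norm_eq, Real.sq_sqrt (by positivity)]
    simp [dotProduct, sq, Real.norm_eq_abs, abs_mul_abs_self]
  have h := (LinearMap.toContinuousLinearMap (Matrix.toEuclideanLin E)).le_opNorm
      ((WithLp.equiv 2 (Fin n → ℝ)).symm v)
  have h1 : (LinearMap.toContinuousLinearMap (Matrix.toEuclideanLin E))
      ((WithLp.equiv 2 (Fin n → ℝ)).symm v)
      = (WithLp.equiv 2 (Fin n → ℝ)).symm (E *ᵥ v) := by
    simp
  rw [h1] at h
  have h2 := pow_le_pow_left₀ (norm_nonneg _) h 2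
  rw [hnorm] at h2
  calc (E *ᵥ v) ⬝ᵥ (E *ᵥ v) ≤ (matOpNorm E * ‖(WithLp.equiv 2 (Fin n → ℝ)).symm v‖)^2 := h2
    _ = matOpNorm E ^2 * (v ⬝ᵥ v) := by rw [mul_pow, hnorm]

lemma parseval_aux {n : ℕ} (u : Fin n → (Fin n → ℝ))
    (hu : ∀ i j, u i ⬝ᵥ u j = if i = j then (1 : ℝ) else 0) :
    ∀ v w : Fin n → ℝ, (∑ i, (u i ⬝ᵥ v) * (u i ⬝ᵥ w)) = v ⬝ᵥ w := by
  intro v w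
  set U : Matrix (Fin n) (Fin n) ℝ := Matrix.of (fun i j => u i j) with hUdef
  have hU1 : U * Uᵀ = 1 := by
    ext i j
    have := hu i j
    simpa [hUdef, Matrix.mul_apply, Matrix.one_apply, dotProduct] using this
  have hU2 : Uᵀ * U = 1 := mul_eq_one_comm.mp hU1
  have h3 : (∑ i, (u i ⬝ᵥ v) * (u i ⬝ᵥ w)) = (U *ᵥ v) ⬝ᵥ (U *ᵥ w) := rfl
  rw [h3, Matrix.dotProduct_mulVec, ← Matrix.mulVec_transpose, Matrix.mulVec_mulVec, hU2,
    Matrix.one_mulVec]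

lemma symm_dot {n : ℕ} (M : Matrix (Fin n) (Fin n) ℝ) (hM : M.IsSymm)
    (v w : Fin n → ℝ) : v ⬝ᵥ (M *ᵥ w) = (M *ᵥ v) ⬝ᵥ w := by
  rw [Matrix.dotProduct_mulVec, ← Matrix.mulVec_transpose, hM]

set_option maxHeartbeats 1000000 in
/-- Corollary 4.8: upper perturbation bound for the largest eigenvalue when
`A` has exactly `r` eigenvalues at least `λ_1/2`. -/
theorem largest_eigenvalue_upper_perturbation'
    {n : ℕ} (hn : 1 ≤ n) (A E : Matrix (Fin n) (Fin n) ℝ)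
    (hA : A.IsSymm) (hE : E.IsSymm)
    (lam tlam : Fin n → ℝ) (u tu : Fin n → (Fin n → ℝ))
    (hlam : Antitone lam) (htlam : Antitone tlam)
    (hu : ∀ i j, u i ⬝ᵥ u j = if i = j then (1 : ℝ) else 0)
    (htu : ∀ i j, tu i ⬝ᵥ tu j = if i = j then (1 : ℝ) else 0)
    (hAu : ∀ i, A *ᵥ u i = lam i • u i)
    (hAtu : ∀ i, (A + E) *ᵥ tu i = tlam i • tu i)
    (hlam1 : 48 * matOpNorm E ≤ lam ⟨0, by omega⟩)
    -- A has exactly r eigenvalues ≥ λ_1/2 :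
    (r : ℕ) (hrn : r ≤ n)
    (hrchar : ∀ i : Fin n, (i : ℕ) < r ↔ lam ⟨0, by omega⟩ / 2 ≤ lam i)
    (x : ℝ)
    (hx : IsLUB (insert (0 : ℝ)
      {t | ∃ i j : Fin n, (i : ℕ) < r ∧ (j : ℕ) < r ∧ t = |u i ⬝ᵥ (E *ᵥ u j)|}) x) :
    tlam ⟨0, by omega⟩ - lam ⟨0, by omega⟩ ≤
      max (6 * r * x) (72 * r * matOpNorm E ^ 2 / lam ⟨0, by omega⟩) := by
  set z : Fin n := ⟨0, by omega⟩ with hzdef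
  set N := matOpNorm E with hNdef
  set L := lam z with hLdef
  have hN0 : 0 ≤ N := norm_nonneg _
  have hL0 : 0 ≤ L := le_trans (by positivity) hlam1
  have hx0 : 0 ≤ x := hx.1 (Set.mem_insert 0 _)
  have hxe : ∀ i j : Fin n, (i:ℕ) < r → (j:ℕ) < r → |u i ⬝ᵥ (E *ᵥ u j)| ≤ x :=
    fun i j hi hj => hx.1 (Set.mem_insert_of_mem _ ⟨i, j, hi, hj, rfl⟩)
  have hr1 : 1 ≤ r := by
    have := (hrchar z).mpr (by linarith)
    omega
  have hAEsymm : (A + E).IsSymm := hA.add hE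
  have hzle : ∀ i : Fin n, z ≤ i := by
    intro i; rw [Fin.le_def]; exact Nat.zero_le _
  have hlamle : ∀ i, lam i ≤ L := fun i => hlam (hzle i)
  have key := parseval_aux u hu
  have tkey := parseval_aux tu htu
  -- unit norms
  have hutu : tu z ⬝ᵥ tu z = 1 := by simp [htu z z]
  have huu : u z ⬝ᵥ u z = 1 := by simp [hu z z]
  -- |v ⬝ E w| ≤ N for unit vectors
  have hEunit : ∀ v w : Fin n → ℝ, v ⬝ᵥ v ≤ 1 → w ⬝ᵥ w ≤ 1 → |v ⬝ᵥ (E *ᵥ w)| ≤ N := by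
    intro v w hv hw
    have hcs := Finset.sum_mul_sq_le_sq_mul_sq Finset.univ v (E *ᵥ w)
    have hop := mulVec_sq_le E w
    have h1 : (v ⬝ᵥ (E *ᵥ w))^2 ≤ N^2 := by
      have hv0 := dot_self_nonneg' v
      have hEw0 := dot_self_nonneg' (E *ᵥ w)
      have : (v ⬝ᵥ (E *ᵥ w))^2 ≤ (v ⬝ᵥ v) * ((E *ᵥ w) ⬝ᵥ (E *ᵥ w)) := by
        simpa [dotProduct, sq] using hcs
      nlinarith [sq_nonneg N]
    exact abs_le_of_sq_le' (by rw [sq_abs]; exact h1) hN0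
  -- coefficients
  set c : Fin n → ℝ := fun i => u i ⬝ᵥ tu z with hcdef
  set g : Fin n → ℝ := fun i => u i ⬝ᵥ (E *ᵥ tu z) with hgdef
  have hc1 : ∑ i, c i ^ 2 = 1 := by
    have := key (tu z) (tu z)
    rw [hutu] at this
    simpa [sq] using this
  have hg2 : ∑ i, g i ^ 2 ≤ N ^ 2 := by
    have := key (E *ᵥ tu z) (E *ᵥ tu z)
    have hop := mulVec_sq_le E (tu z)
    rw [hutu, mul_one] at hop
    calc ∑ i, g i ^ 2 = (E *ᵥ tu z) ⬝ᵥ (E *ᵥ tu z) := by rw [← this]; simp [sq, hgdef]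
      _ ≤ N ^ 2 := hop
  -- eigen relation
  have hrel : ∀ i, (tlam z - lam i) * c i = g i := by
    intro i
    have h1 : u i ⬝ᵥ ((A + E) *ᵥ tu z) = tlam z * c i := by
      rw [hAtu z, dotProduct_smul]; rfl
    have h2 : u i ⬝ᵥ (A *ᵥ tu z) = lam i * c i := by
      rw [symm_dot A hA, hAu i, smul_dotProduct]; rfl
    have h3 : u i ⬝ᵥ ((A + E) *ᵥ tu z) = u i ⬝ᵥ (A *ᵥ tu z) + g i := by
      rw [Matrix.add_mulVec, dotProduct_add]
    rw [h1, h2] at h3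
    linarith [h3]
  -- Weyl lower bound : L - N ≤ tlam z
  have hWeyl : L - N ≤ tlam z := by
    have hq : u z ⬝ᵥ ((A + E) *ᵥ u z) = L + u z ⬝ᵥ (E *ᵥ u z) := by
      rw [Matrix.add_mulVec, dotProduct_add, hAu z, dotProduct_smul, smul_eq_mul, huu, mul_one]
    have hup : u z ⬝ᵥ ((A + E) *ᵥ u z) ≤ tlam z := by
      have hexp := tkey (u z) ((A + E) *ᵥ u z)
      have hterm : ∀ i, (tu i ⬝ᵥ ((A + E) *ᵥ u z)) = tlam i * (tu i ⬝ᵥ u z) := by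
        intro i
        rw [symm_dot _ hAEsymm, hAtu i, smul_dotProduct]; rfl
      have hd1 : ∑ i, (tu i ⬝ᵥ u z) * (tu i ⬝ᵥ u z) = 1 := by
        rw [tkey (u z) (u z), huu]
      calc u z ⬝ᵥ ((A + E) *ᵥ u z)
          = ∑ i, (tu i ⬝ᵥ u z) * (tlam i * (tu i ⬝ᵥ u z)) := by
            rw [← hexp]; exact Finset.sum_congr rfl fun i _ => by rw [hterm i]
        _ ≤ ∑ i, (tu i ⬝ᵥ u z) * (tlam z * (tu i ⬝ᵥ u z)) := by
            apply Finset.sum_le_sum; intro i _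
            have := htlam (hzle i)
            nlinarith [mul_self_nonneg (tu i ⬝ᵥ u z)]
        _ = tlam z * ∑ i, (tu i ⬝ᵥ u z) * (tu i ⬝ᵥ u z) := by
            rw [Finset.mul_sum]; exact Finset.sum_congr rfl fun i _ => by ring
        _ = tlam z := by rw [hd1, mul_one]
    have habs := hEunit (u z) (u z) (le_of_eq huu) (le_of_eq huu)
    have := abs_le.mp habs
    linarith [this.1, hq ▸ hup]
  -- δ ≤ F
  set F := tu z ⬝ᵥ (E *ᵥ tu z) with hFdef
  have hdF : tlam z - L ≤ F := by
    have h1 : tu z ⬝ᵥ ((A + E) *ᵥ tu z) = tlam z := by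
      rw [hAtu z, dotProduct_smul, smul_eq_mul, hutu, mul_one]
    have h2 : tu z ⬝ᵥ (A *ᵥ tu z) ≤ L := by
      have hexp := key (tu z) (A *ᵥ tu z)
      have hterm : ∀ i, u i ⬝ᵥ (A *ᵥ tu z) = lam i * c i := by
        intro i; rw [symm_dot A hA, hAu i, smul_dotProduct]; rfl
      calc tu z ⬝ᵥ (A *ᵥ tu z) = ∑ i, c i * (lam i * c i) := by
            rw [← hexp]; exact Finset.sum_congr rfl fun i _ => by rw [hterm i]
        _ ≤ ∑ i, L * c i ^ 2 := by
            apply Finset.sum_le_sum; intro i _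
            nlinarith [hlamle i, sq_nonneg (c i)]
        _ = L := by rw [← Finset.mul_sum, hc1, mul_one]
    have h3 : tu z ⬝ᵥ ((A + E) *ᵥ tu z) = tu z ⬝ᵥ (A *ᵥ tu z) + F := by
      rw [Matrix.add_mulVec, dotProduct_add]
    linarith [h1 ▸ h3]
  -- F = Σ c g
  have hFsum : F = ∑ i, c i * g i := by
    rw [hFdef, ← key (tu z) (E *ᵥ tu z)]
  -- case N = 0
  rcases eq_or_lt_of_le hN0 with hNz | hNpos
  · have : |F| ≤ N := hEunit (tu z) (tu z) (le_of_eq hutu) (le_of_eq hutu)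
    have h6 : (0:ℝ) ≤ 6 * r * x := by positivity
    have := abs_le.mp this
    have : tlam z - L ≤ 0 := by linarith [hdF, this.2, hNz]
    exact le_trans this (le_trans h6 (le_max_left _ _))
  -- main case
  have hL : 0 < L := by linarith
  set S : Finset (Fin n) := Finset.univ.filter (fun i => (i:ℕ) < r) with hSdef
  have hmemS : ∀ i : Fin n, i ∈ S ↔ (i:ℕ) < r := by
    intro i; simp [hSdef]
  have hmemT : ∀ i : Fin n, i ∈ Sᶜ ↔ ¬ (i:ℕ) < r := by
    intro i; simp [hSdef]
  have hcard : S.card ≤ r := by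
    have h := Finset.card_le_card_of_injOn (t := Finset.range r) (fun (i : Fin n) => (i:ℕ))
      (fun i hi => Finset.mem_range.2 ((hmemS i).1 hi))
      (fun a _ b _ h => Fin.val_injective h)
    simpa using h
  have hcS1 : ∑ i ∈ S, c i ^ 2 ≤ 1 := by
    rw [← hc1]
    exact Finset.sum_le_sum_of_subset_of_nonneg (Finset.subset_univ S)
      (fun i _ _ => sq_nonneg _)
  set QQ := ∑ i ∈ Sᶜ, c i ^ 2 with hQQdef
  have hQQ0 : 0 ≤ QQ := Finset.sum_nonneg fun i _ => sq_nonneg _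
  -- QQ bound
  have hQQN : (23/48 * L)^2 * QQ ≤ N^2 := by
    have hper : ∀ i ∈ Sᶜ, (23/48 * L)^2 * c i ^2 ≤ g i ^2 := by
      intro i hi
      have hlt : lam i < L / 2 := by
        by_contra hcon
        exact (hmemT i).1 hi ((hrchar i).mpr (by linarith))
      have hd : 23/48 * L ≤ tlam z - lam i := by linarith [hWeyl, hlam1]
      rw [← hrel i]
      nlinarith [sq_nonneg (c i),
        mul_nonneg (mul_nonneg (by linarith : (0:ℝ) ≤ (tlam z - lam i) - 23/48 * L)
          (by linarith : (0:ℝ) ≤ (tlam z - lam i) + 23/48 * L)) (sq_nonneg (c i))]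
    calc (23/48 * L)^2 * QQ = ∑ i ∈ Sᶜ, (23/48 * L)^2 * c i ^2 := by
          rw [Finset.mul_sum]
      _ ≤ ∑ i ∈ Sᶜ, g i ^2 := Finset.sum_le_sum hper
      _ ≤ ∑ i, g i ^2 := Finset.sum_le_sum_of_subset_of_nonneg (Finset.subset_univ _)
          (fun i _ _ => sq_nonneg _)
      _ ≤ N^2 := hg2
  set B := 48/23 * N^2 / L with hBdef
  have hB0 : 0 ≤ B := by positivity
  have hPB : ∀ P : ℝ, P^2 ≤ QQ * N^2 → P ≤ B := by
    intro P hP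
    rw [hBdef, le_div_iff₀ hL]
    apply abs_le_of_sq_le' _ (by positivity)
    nlinarith [mul_le_mul_of_nonneg_right hQQN (sq_nonneg N),
      mul_le_mul_of_nonneg_right hP (sq_nonneg L), sq_nonneg N, sq_nonneg L]
  -- bound on tail part
  have hFT : ∑ i ∈ Sᶜ, c i * g i ≤ B := by
    apply hPB
    have hcs := Finset.sum_mul_sq_le_sq_mul_sq Sᶜ c g
    have hgT : ∑ i ∈ Sᶜ, g i ^2 ≤ N^2 :=
      le_trans (Finset.sum_le_sum_of_subset_of_nonneg (Finset.subset_univ _)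
        (fun i _ _ => sq_nonneg _)) hg2
    nlinarith [hQQ0]
  -- the vector w and its coefficients
  set w : Fin n → ℝ := ∑ j ∈ S, c j • u j with hwdef
  have hw : ∀ v : Fin n → ℝ, w ⬝ᵥ v = ∑ j ∈ S, c j * (u j ⬝ᵥ v) := by
    intro v
    simp only [hwdef, dotProduct, Finset.sum_apply, Pi.smul_apply, smul_eq_mul,
      Finset.sum_mul, Finset.mul_sum]
    rw [Finset.sum_comm]
    exact Finset.sum_congr rfl fun j _ => Finset.sum_congr rfl fun i _ => by ring
  have hww : w ⬝ᵥ w ≤ 1 := by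
    have : w ⬝ᵥ w = ∑ j ∈ S, c j ^ 2 := by
      rw [hw w]
      refine Finset.sum_congr rfl fun j hj => ?_
      have : u j ⬝ᵥ w = c j := by
        rw [dotProduct_comm, hw (u j)]
        rw [Finset.sum_eq_single j]
        · rw [hu j j]; simp
        · intro k hk hkj; rw [hu k j, if_neg hkj]; ring
        · intro hj'; exact absurd hj hj'
      rw [this]; ring
    rw [this]; exact hcS1
  set h : Fin n → ℝ := fun i => u i ⬝ᵥ (E *ᵥ w) with hhdef
  have hh : ∀ i, h i = ∑ j ∈ S, c j * (u i ⬝ᵥ (E *ᵥ u j)) := by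
    intro i
    rw [hhdef]
    simp only
    rw [symm_dot E hE, dotProduct_comm, hw (E *ᵥ u i)]
    refine Finset.sum_congr rfl fun j _ => ?_
    rw [symm_dot E hE, dotProduct_comm]
  have hh2 : ∑ i, h i ^ 2 ≤ N ^ 2 := by
    have hexp := key (E *ᵥ w) (E *ᵥ w)
    have hop := mulVec_sq_le E w
    calc ∑ i, h i ^2 = (E *ᵥ w) ⬝ᵥ (E *ᵥ w) := by rw [← hexp]; simp [hhdef, sq]
      _ ≤ N^2 * (w ⬝ᵥ w) := hop
      _ ≤ N^2 := by nlinarith [sq_nonneg N]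
  -- decomposition of g j for j ∈ S
  have hgS : ∀ j, g j = ∑ i, c i * (u i ⬝ᵥ (E *ᵥ u j)) := by
    intro j
    rw [hgdef]
    simp only
    rw [symm_dot E hE, ← key (E *ᵥ u j) (tu z)]
    refine Finset.sum_congr rfl fun i _ => ?_
    rw [mul_comm]
  -- split head part
  have hFS : ∑ j ∈ S, c j * g j
      = (∑ j ∈ S, ∑ i ∈ S, c j * (c i * (u i ⬝ᵥ (E *ᵥ u j))))
        + ∑ i ∈ Sᶜ, c i * h i := by
    have h1 : ∀ j, c j * g j
        = (∑ i ∈ S, c j * (c i * (u i ⬝ᵥ (E *ᵥ u j))))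
          + ∑ i ∈ Sᶜ, c j * (c i * (u i ⬝ᵥ (E *ᵥ u j))) := by
      intro j
      rw [← Finset.mul_sum, ← Finset.mul_sum, ← mul_add, Finset.sum_add_sum_compl, ← hgS j]
    rw [Finset.sum_congr rfl fun j _ => h1 j, Finset.sum_add_distrib]
    congr 1
    rw [Finset.sum_comm]
    refine Finset.sum_congr rfl fun i _ => ?_
    rw [hh i, Finset.mul_sum]
    exact Finset.sum_congr rfl fun j _ => by ring
  -- SS bound
  have hSS : ∑ j ∈ S, ∑ i ∈ S, c j * (c i * (u i ⬝ᵥ (E *ᵥ u j))) ≤ x * r := by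
    have habs : ∑ j ∈ S, ∑ i ∈ S, c j * (c i * (u i ⬝ᵥ (E *ᵥ u j)))
        ≤ ∑ j ∈ S, ∑ i ∈ S, |c j| * (|c i| * x) := by
      apply Finset.sum_le_sum; intro j hj
      apply Finset.sum_le_sum; intro i hi
      have hx' := hxe i j ((hmemS i).1 hi) ((hmemS j).1 hj)
      calc c j * (c i * (u i ⬝ᵥ (E *ᵥ u j))) ≤ |c j * (c i * (u i ⬝ᵥ (E *ᵥ u j)))| :=
            le_abs_self _
        _ = |c j| * (|c i| * |u i ⬝ᵥ (E *ᵥ u j)|) := by rw [abs_mul, abs_mul]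
        _ ≤ |c j| * (|c i| * x) := by
            apply mul_le_mul_of_nonneg_left _ (abs_nonneg _)
            exact mul_le_mul_of_nonneg_left hx' (abs_nonneg _)
    have heq : ∑ j ∈ S, ∑ i ∈ S, |c j| * (|c i| * x) = (∑ i ∈ S, |c i|)^2 * x := by
      calc ∑ j ∈ S, ∑ i ∈ S, |c j| * (|c i| * x)
          = ∑ j ∈ S, |c j| * ((∑ i ∈ S, |c i|) * x) :=
            Finset.sum_congr rfl fun j _ => by rw [← Finset.mul_sum, Finset.sum_mul]
        _ = (∑ j ∈ S, |c j|) * ((∑ i ∈ S, |c i|) * x) := by rw [← Finset.sum_mul]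
        _ = (∑ i ∈ S, |c i|)^2 * x := by ring
    have hsum : (∑ i ∈ S, |c i|)^2 ≤ r := by
      have hcs := Finset.sum_mul_sq_le_sq_mul_sq S (fun _ => (1:ℝ)) (fun i => |c i|)
      simp only [one_mul, one_pow] at hcs
      have h1 : ∑ i ∈ S, |c i| ^2 = ∑ i ∈ S, c i ^2 := by
        exact Finset.sum_congr rfl fun i _ => by rw [sq_abs]
      have h2 : (∑ _i ∈ S, (1:ℝ)) = S.card := by simp
      have hcr : (S.card : ℝ) ≤ r := by exact_mod_cast hcard
      calc (∑ i ∈ S, |c i|)^2 ≤ (∑ _i ∈ S, (1:ℝ)) * ∑ i ∈ S, |c i|^2 := hcs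
        _ = (S.card : ℝ) * ∑ i ∈ S, c i ^2 := by rw [h1, h2]
        _ ≤ r * 1 := by
            apply mul_le_mul hcr hcS1 (Finset.sum_nonneg fun i _ => sq_nonneg _)
              (Nat.cast_nonneg r)
        _ = r := mul_one _
    calc ∑ j ∈ S, ∑ i ∈ S, c j * (c i * (u i ⬝ᵥ (E *ᵥ u j)))
        ≤ (∑ i ∈ S, |c i|)^2 * x := by rw [← heq]; exact habs
      _ ≤ r * x := mul_le_mul_of_nonneg_right hsum hx0
      _ = x * r := mul_comm _ _
  -- ST bound
  have hST : ∑ i ∈ Sᶜ, c i * h i ≤ B := by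
    apply hPB
    have hcs := Finset.sum_mul_sq_le_sq_mul_sq Sᶜ c h
    have hhT : ∑ i ∈ Sᶜ, h i ^2 ≤ N^2 :=
      le_trans (Finset.sum_le_sum_of_subset_of_nonneg (Finset.subset_univ _)
        (fun i _ _ => sq_nonneg _)) hh2
    nlinarith [hQQ0]
  -- total
  have htotal : tlam z - L ≤ x * r + B + B := by
    have hsplit : F = (∑ j ∈ S, c j * g j) + ∑ i ∈ Sᶜ, c i * g i := by
      rw [hFsum, Finset.sum_add_sum_compl]
    rw [hsplit] at hdF
    rw [hFS] at hdF
    linarith [hSS, hST, hFT]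
  -- conclude
  rcases le_total (x * r) (2 * B) with hcase | hcase
  · refine le_trans ?_ (le_max_right _ _)
    have hr1' : (1:ℝ) ≤ r := by exact_mod_cast hr1
    have hdiv : 4 * B ≤ 72 * r * N^2 / L := by
      have h1 : 4 * B = 4 * (48/23) * N^2 / L := by rw [hBdef]; ring
      have hab : 4 * (48/23) * N^2 ≤ 72 * r * N^2 := by nlinarith [sq_nonneg N]
      rw [h1]
      exact div_le_div_of_nonneg_right hab hL.le
    linarith
  · refine le_trans ?_ (le_max_left _ _)
    have : tlam z - L ≤ 2 * (x * r) := by linarith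
    nlinarith [mul_nonneg hx0 (Nat.cast_nonneg r : (0:ℝ) ≤ r)]
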